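/- For a local renormalisation operator R built from a counterterm map r via R(τ) = q_F τ + Σ_{τ'} r(τ') C₋(τ',τ), the coproduct intertwines with R: for every product tree τ ∈ 𝒩̊ ∪ 𝒲̊, Δ R τ = (R ⊗ Id) Δ τ. -/

import Mathlib

/-- Trees built from generators `𝟏`, `X i`, `Ξ` by the ternary product
`τ₁,τ₂,τ₃ ↦ I(τ₁)I(τ₂)I(τ₃)`. -/
inductive T (d : ℕ) : Type
  | one : T d
  | X : Fin d → T d
  | Xi : T d
  | prod : T d → T d → T d → T d
deriving DecidableEq

namespace T

variable {d : ℕ}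

/-- The order of a tree, with parameter `δ`. -/
noncomputable def order (δ : ℝ) : T d → ℝ
  | one => -2
  | X _ => -1
  | Xi => -3 + δ
  | prod a b c => 6 + order δ a + order δ b + order δ c

/-- Number of `𝟏`-leaves. -/
def mOne : T d → ℕ
  | one => 1
  | X _ => 0
  | Xi => 0
  | prod a b c => mOne a + mOne b + mOne c

/-- Total number of `X i`-leaves. -/
def mX : T d → ℕ
  | one => 0
  | X _ => 1
  | Xi => 0
  | prod a b c => mX a + mX b + mX c

/-- Number of noise leaves `Ξ`. -/
def mXi : T d → ℕ
  | one => 0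
  | X _ => 0
  | Xi => 1
  | prod a b c => mXi a + mXi b + mXi c

end T

namespace T
/-- Whether a tree is a ternary product (i.e. not a generator). -/
def isProd {d : ℕ} : T d → Bool
  | prod _ _ _ => true
  | _ => false

/-- Membership in `Ñ`: ternary-product trees of order in `(-1, 0)`. -/
def inTildeN {d : ℕ} (δ : ℝ) (τ : T d) : Prop :=
  isProd τ = true ∧ -1 < order δ τ ∧ order δ τ < 0

noncomputable instance {d : ℕ} (δ : ℝ) (τ : T d) : Decidable (inTildeN δ τ) := by
  unfold inTildeN; infer_instance
end T

/-- Planted trees with the two kinds of derivative edges: `I(τ)`, `I⁺ᵢ(τ)` and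
`I⁻ᵢ(τ)`. -/
inductive PTm (d : ℕ) : Type
  | I : T d → PTm d
  | Ip : Fin d → T d → PTm d
  | Im : Fin d → T d → PTm d
deriving DecidableEq

/-- The product on `Vec(𝒯ₗ) ⊗ Alg`: three terms `I(τᵢ) ⊗ aᵢ` are combined into
`I(τ₁)I(τ₂)I(τ₃) ⊗ a₁·a₂·a₃`.  A planted tree `I(τ̄)` in the left factor is
represented by its argument `τ̄`, a forest by a list of planted trees. -/
noncomputable def mulE {d : ℕ} (f g h : (T d × List (PTm d)) →₀ ℝ) :
    (T d × List (PTm d)) →₀ ℝ :=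
  f.sum fun p cp => g.sum fun q cq => h.sum fun s cs =>
    Finsupp.single (T.prod p.1 q.1 s.1, p.2 ++ q.2 ++ s.2) (cp * cq * cs)

/-- The coproduct `Δ I(τ)` of a planted tree; a basis element
`I(τ̄) ⊗ (σ₁ ⋯ σₙ)` is recorded as the pair `(τ̄, [σ₁, …, σₙ])`. -/
noncomputable def DI {d : ℕ} (δ : ℝ) : T d → (T d × List (PTm d)) →₀ ℝ
  | T.one => Finsupp.single (T.one, [PTm.I T.one]) 1
  | T.X i =>
      Finsupp.single (T.one, [PTm.I (T.X i)]) 1 +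
        Finsupp.single (T.X i, [PTm.Ip i (T.X i)]) 1
  | T.Xi => Finsupp.single (T.Xi, []) 1
  | T.prod a b c =>
      if T.order δ (T.prod a b c) < -2 then
        Finsupp.single (T.prod a b c, []) 1
      else
        Finsupp.single (T.one, [PTm.I (T.prod a b c)]) 1 +
          (if T.inTildeN δ (T.prod a b c) then
            ∑ i : Fin d, Finsupp.single (T.X i, [PTm.Ip i (T.prod a b c)]) 1
          else 0) +
          mulE (DI δ a) (DI δ b) (DI δ c)

/-- The coproduct `Δτ` of an unplanted tree `τ ∈ 𝒯ᵣ` (with the conventions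
`Δ𝟏 = ΔXᵢ = 0` for the bare generators, which do not belong to `𝒯ᵣ`). -/
noncomputable def Du {d : ℕ} (δ : ℝ) : T d → (T d × List (PTm d)) →₀ ℝ
  | T.one => 0
  | T.X _ => 0
  | T.Xi => Finsupp.single (T.Xi, []) 1
  | T.prod a b c => mulE (DI δ a) (DI δ b) (DI δ c)

/-- The trees `τ` for which the symbol `I⁺ᵢ(τ)` is nonzero: `τ = Xᵢ` or `τ ∈ Ñ`. -/
def ipOk {d : ℕ} (δ : ℝ) (i : Fin d) (τ : T d) : Prop :=
  τ = T.X i ∨ T.inTildeN δ τ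

noncomputable instance {d : ℕ} (δ : ℝ) (i : Fin d) (τ : T d) :
    Decidable (ipOk δ i τ) := by unfold ipOk; infer_instance

/-- The coproduct `Δ I⁺ᵢ(τ)`. -/
noncomputable def DIp {d : ℕ} (δ : ℝ) (i : Fin d) (τ : T d) :
    (PTm d × List (PTm d)) →₀ ℝ :=
  if τ = T.X i then
    Finsupp.single (PTm.Ip i (T.X i), [PTm.Ip i (T.X i)]) 1
  else if T.inTildeN δ τ then
    Finsupp.single (PTm.Ip i (T.X i), [PTm.Ip i τ]) 1 +
      (Du δ τ).sum fun p c =>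
        if ipOk δ i p.1 then Finsupp.single (PTm.Ip i p.1, p.2) c else 0
  else 0

/-- The embedding `τ̄ ↦ I⁻ᵢ(τ̄)` with the conventions `I⁻ᵢ(𝟏) = 0`,
`I⁻ᵢ(X_j) = 0` for `j ≠ i`, and `I⁻ᵢ(Xᵢ) = I⁺ᵢ(Xᵢ)`. -/
def imEmb {d : ℕ} (i : Fin d) : T d → Option (PTm d)
  | T.one => none
  | T.X j => if j = i then some (PTm.Ip i (T.X i)) else none
  | τ => some (PTm.Im i τ)

/-- The coproduct on planted trees, including the derivative edges `I⁻ᵢ`: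
`Δ I⁻ᵢ(τ) = (I⁻ᵢ ⊗ Id)Δτ + I⁺ᵢ(Xᵢ) ⊗ I⁺ᵢ(τ)`. -/
noncomputable def DPm {d : ℕ} (δ : ℝ) : PTm d → (PTm d × List (PTm d)) →₀ ℝ
  | PTm.I τ => (DI δ τ).sum fun p c => Finsupp.single (PTm.I p.1, p.2) c
  | PTm.Ip i τ => DIp δ i τ
  | PTm.Im i τ =>
      match τ with
      | T.one => 0
      | T.X j => if j = i then DIp δ i (T.X i) else 0
      | τ =>
          ((Du δ τ).sum fun p c =>
            match imEmb i p.1 with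
            | some q => Finsupp.single (q, p.2) c
            | none => 0) +
          (if T.inTildeN δ τ then
            Finsupp.single (PTm.Ip i (T.X i), [PTm.Ip i τ]) 1
          else 0)

/-- The coproduct extended multiplicatively to forests of planted trees. -/
noncomputable def DFm {d : ℕ} (δ : ℝ) :
    List (PTm d) → (List (PTm d) × List (PTm d)) →₀ ℝ
  | [] => Finsupp.single ([], []) 1
  | p :: rest =>
      (DPm δ p).sum fun q cq => (DFm δ rest).sum fun s cs =>
        Finsupp.single (q.1 :: s.1, q.2 ++ s.2) (cq * cs)

/-- The modified cut map `C₋(τ̄, τ)` (no projection onto positive order), with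
the conventions for the edges `I⁻ᵢ` built in. -/
def Cminus {d : ℕ} : T d → T d → Option (List (PTm d))
  | T.one, T.one => some [PTm.I T.one]
  | T.one, T.X j => some [PTm.I (T.X j)]
  | T.one, T.Xi => some [PTm.I T.Xi]
  | T.one, T.prod x y z => some [PTm.I (T.prod x y z)]
  | T.X i, T.X j => if j = i then some [PTm.Ip i (T.X i)] else none
  | T.X i, T.Xi => some [PTm.Im i T.Xi]
  | T.X i, T.prod x y z => some [PTm.Im i (T.prod x y z)]
  | T.Xi, T.Xi => some []
  | T.prod a b c, T.prod x y z =>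
      match Cminus a x, Cminus b y, Cminus c z with
      | some f1, some f2, some f3 => some (f1 ++ f2 ++ f3)
      | _, _, _ => none
  | _, _ => none

/-- A finite set containing every tree `τ̄ ≤ τ`. -/
def subs {d : ℕ} : T d → Finset (T d)
  | T.one => {T.one}
  | T.X i => {T.one, T.X i}
  | T.Xi => {T.one, T.Xi} ∪ Finset.univ.image (fun i : Fin d => T.X i)
  | T.prod a b c =>
      ({T.one} ∪ Finset.univ.image (fun i : Fin d => T.X i)) ∪
        ((subs a ×ˢ subs b ×ˢ subs c).image fun p => T.prod p.1 p.2.1 p.2.2)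

/-- `τ` is not a generator `X i`. -/
def noXgen {d : ℕ} : T d → Prop
  | T.X _ => False
  | _ => True

/-- Membership in the set `𝒬` of "non-trivial products": ternary products
`I(τ₁)I(τ₂)I(τ₃) ∈ 𝒩̊ ∪ 𝒲̊` with no factor `Xᵢ` and at most one factor `𝟏`. -/
def Qcond {d : ℕ} (δ : ℝ) : T d → Prop
  | T.prod a b c =>
      (noXgen a ∧ noXgen b ∧ noXgen c) ∧
        ((if a = T.one then 1 else 0) + (if b = T.one then 1 else 0) +
            (if c = T.one then 1 else 0) ≤ (1 : ℕ)) ∧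
        T.order δ (T.prod a b c) ≤ 0
  | _ => False

/-- Equality of trees up to permutations of the ternary tree product. -/
inductive TEquiv {d : ℕ} : T d → T d → Prop
  | one : TEquiv T.one T.one
  | X (i : Fin d) : TEquiv (T.X i) (T.X i)
  | Xi : TEquiv T.Xi T.Xi
  | prod {a b c x y z : T d} :
      TEquiv a x → TEquiv b y → TEquiv c z →
      TEquiv (T.prod a b c) (T.prod x y z)
  | swap12 (a b c : T d) : TEquiv (T.prod a b c) (T.prod b a c)
  | swap23 (a b c : T d) : TEquiv (T.prod a b c) (T.prod a c b)
  | trans {s t u : T d} : TEquiv s t → TEquiv t u → TEquiv s u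

/-- The local renormalisation operator `R` built from the counterterm map `r`:
`R(τ) = q_F τ + Σ_{τ'} r(τ') C₋(τ', τ)` for ternary products `τ`, as an element
of `Alg(𝒯ₗ,₋)`. -/
noncomputable def Rmap {d : ℕ} (r : T d → ℝ) : T d → (List (PTm d)) →₀ ℝ
  | T.prod a b c =>
      Finsupp.single [PTm.I a, PTm.I b, PTm.I c] 1 +
        ∑ τ' ∈ subs (T.prod a b c),
          r τ' • (match Cminus τ' (T.prod a b c) with
            | some f => Finsupp.single f (1 : ℝ)
            | none => 0)
  | _ => 0

section LsumToolbox


variable {α β γ : Type*} {ι : Type*}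

/-- `lsm F u = Σ_x F(x) • u x`. -/
@[reducible] noncomputable def lsm (F : α →₀ ℝ) (u : α → (β →₀ ℝ)) : β →₀ ℝ :=
  F.sum fun x c => c • u x

lemma lsm_single (a : α) (c : ℝ) (u : α → β →₀ ℝ) :
    lsm (Finsupp.single a c) u = c • u a := by
  unfold lsm
  rw [Finsupp.sum_single_index (zero_smul ℝ (u a))]

lemma lsm_zero (u : α → β →₀ ℝ) : lsm (0 : α →₀ ℝ) u = 0 :=
  Finsupp.sum_zero_index

lemma lsm_zero_fun (F : α →₀ ℝ) : lsm F (fun _ => (0 : β →₀ ℝ)) = 0 := by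
  simp [lsm]

lemma lsm_add (F G : α →₀ ℝ) (u : α → β →₀ ℝ) :
    lsm (F + G) u = lsm F u + lsm G u :=
  Finsupp.sum_add_index' (fun a => zero_smul ℝ (u a))
    (fun a b₁ b₂ => add_smul b₁ b₂ (u a))

lemma lsm_smul (c : ℝ) (F : α →₀ ℝ) (u : α → β →₀ ℝ) :
    lsm (c • F) u = c • lsm F u := by
  unfold lsm
  rw [Finsupp.sum_smul_index (fun x => zero_smul ℝ (u x)), Finsupp.smul_sum]
  simp [mul_smul]

lemma lsm_lsm (F : α →₀ ℝ) (G : α → γ →₀ ℝ) (u : γ → β →₀ ℝ) :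
    lsm (lsm F G) u = lsm F (fun x => lsm (G x) u) := by
  unfold lsm
  rw [Finsupp.sum_sum_index (fun a => zero_smul ℝ (u a))
    (fun a b₁ b₂ => add_smul b₁ b₂ (u a))]
  refine Finsupp.sum_congr fun x _ => ?_
  rw [Finsupp.sum_smul_index (fun y => zero_smul ℝ (u y)), Finsupp.smul_sum]
  simp [mul_smul]

lemma lsm_finset_sum (s : Finset ι) (F : ι → α →₀ ℝ) (u : α → β →₀ ℝ) :
    lsm (∑ i ∈ s, F i) u = ∑ i ∈ s, lsm (F i) u :=
  (Finsupp.sum_finsetSum_index (fun a => zero_smul ℝ (u a))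
    (fun a b₁ b₂ => add_smul b₁ b₂ (u a))).symm

lemma lsm_congr {F : α →₀ ℝ} {u v : α → β →₀ ℝ}
    (h : ∀ x ∈ F.support, u x = v x) : lsm F u = lsm F v :=
  Finsupp.sum_congr fun x hx => by rw [h x hx]

lemma lsm_add_fun (F : α →₀ ℝ) (u v : α → β →₀ ℝ) :
    lsm F (fun x => u x + v x) = lsm F u + lsm F v := by
  simp [lsm, smul_add, Finsupp.sum_add]

lemma lsm_smul_fun (F : α →₀ ℝ) (c : ℝ) (u : α → β →₀ ℝ) :
    lsm F (fun x => c • u x) = c • lsm F u := by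
  simp only [lsm, Finsupp.smul_sum]
  refine Finsupp.sum_congr fun x _ => ?_
  rw [smul_comm]

lemma lsm_comm (F : α →₀ ℝ) (G : γ →₀ ℝ) (v : α → γ → β →₀ ℝ) :
    lsm F (fun x => lsm G (v x)) = lsm G (fun y => lsm F (fun x => v x y)) := by
  simp only [lsm, Finsupp.smul_sum]
  rw [Finsupp.sum_comm]
  refine Finsupp.sum_congr fun y _ => Finsupp.sum_congr fun x _ => ?_
  rw [smul_comm]

lemma lsm_finset_swap (F : α →₀ ℝ) (s : Finset ι) (v : ι → α → β →₀ ℝ) :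
    lsm F (fun x => ∑ i ∈ s, v i x) = ∑ i ∈ s, lsm F (v i) := by
  simp only [lsm, Finset.smul_sum]
  exact Finset.sum_comm

lemma lsm_single_fun (F : α →₀ ℝ) :
    lsm F (fun x => Finsupp.single x (1 : ℝ)) = F := by
  unfold lsm
  simp only [Finsupp.smul_single, smul_eq_mul, mul_one]
  exact Finsupp.sum_single F

lemma lsm_support {F : α →₀ ℝ} {u : α → β →₀ ℝ} {p : β}
    (hp : p ∈ (lsm F u).support) : ∃ x ∈ F.support, p ∈ (u x).support := by
  classical
  have := Finsupp.support_sum hp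
  rcases Finset.mem_biUnion.1 this with ⟨x, hx, hpx⟩
  exact ⟨x, hx, Finsupp.support_smul hpx⟩

end LsumToolbox

section Bridge

variable {d : ℕ}

/-- left-factor/right-factor convolution (product in the tensor algebra). -/
noncomputable def cv (A B : (List (PTm d) × List (PTm d)) →₀ ℝ) :
    (List (PTm d) × List (PTm d)) →₀ ℝ :=
  lsm A fun q => lsm B fun s => Finsupp.single (q.1 ++ s.1, q.2 ++ s.2) (1 : ℝ)

/-- single-tensor picture of the cut map output. -/
noncomputable def CsO (o : Option (List (PTm d))) (g : List (PTm d)) :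
    (List (PTm d) × List (PTm d)) →₀ ℝ :=
  match o with
  | some f => Finsupp.single (f, g) 1
  | none => 0

noncomputable def DFmO (δ : ℝ) (o : Option (List (PTm d))) :
    (List (PTm d) × List (PTm d)) →₀ ℝ :=
  match o with
  | some f => DFm δ f
  | none => 0

def oconv (o₁ o₂ o₃ : Option (List (PTm d))) : Option (List (PTm d)) :=
  match o₁, o₂, o₃ with
  | some f1, some f2, some f3 => some (f1 ++ f2 ++ f3)
  | _, _, _ => none

@[simp] lemma CsO_none (g : List (PTm d)) : CsO (d := d) none g = 0 := rfl
@[simp] lemma CsO_some (f g : List (PTm d)) :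
    CsO (some f) g = Finsupp.single (f, g) 1 := rfl
@[simp] lemma DFmO_none (δ : ℝ) : DFmO (d := d) δ none = 0 := rfl
@[simp] lemma DFmO_some (δ : ℝ) (f : List (PTm d)) : DFmO δ (some f) = DFm δ f := rfl

@[simp] lemma cv_zero_left (B : (List (PTm d) × List (PTm d)) →₀ ℝ) : cv 0 B = 0 :=
  lsm_zero _

@[simp] lemma cv_zero_right (A : (List (PTm d) × List (PTm d)) →₀ ℝ) : cv A 0 = 0 := by
  unfold cv
  simp only [lsm_zero]
  exact lsm_zero_fun A

lemma cv_single_single (x y : List (PTm d) × List (PTm d)) (c e : ℝ) :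
    cv (Finsupp.single x c) (Finsupp.single y e) =
      Finsupp.single (x.1 ++ y.1, x.2 ++ y.2) (c * e) := by
  unfold cv
  rw [lsm_single, lsm_single]
  simp only [Finsupp.smul_single, smul_eq_mul, mul_one]

lemma cv_single_left (x : List (PTm d) × List (PTm d)) (c : ℝ)
    (B : (List (PTm d) × List (PTm d)) →₀ ℝ) :
    cv (Finsupp.single x c) B =
      lsm B fun v => Finsupp.single (x.1 ++ v.1, x.2 ++ v.2) c := by
  unfold cv
  rw [lsm_single, ← lsm_smul_fun]
  refine lsm_congr fun v _ => ?_
  simp [Finsupp.smul_single]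

lemma lsm_cv (A B : (List (PTm d) × List (PTm d)) →₀ ℝ)
    (w : (List (PTm d) × List (PTm d)) → β →₀ ℝ) :
    lsm (cv A B) w = lsm A fun u => lsm B fun v => w (u.1 ++ v.1, u.2 ++ v.2) := by
  unfold cv
  rw [lsm_lsm]
  refine lsm_congr fun u _ => ?_
  rw [lsm_lsm]
  refine lsm_congr fun v _ => ?_
  rw [lsm_single, one_smul]

lemma cv_lsm_left (F : α →₀ ℝ) (u : α → (List (PTm d) × List (PTm d)) →₀ ℝ)
    (B : (List (PTm d) × List (PTm d)) →₀ ℝ) :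
    cv (lsm F u) B = lsm F fun x => cv (u x) B :=
  lsm_lsm _ _ _

lemma cv_lsm_right (F : α →₀ ℝ) (u : α → (List (PTm d) × List (PTm d)) →₀ ℝ)
    (A : (List (PTm d) × List (PTm d)) →₀ ℝ) :
    cv A (lsm F u) = lsm F fun x => cv A (u x) := by
  unfold cv
  have : ∀ q : List (PTm d) × List (PTm d),
      lsm (lsm F u) (fun s => Finsupp.single (q.1 ++ s.1, q.2 ++ s.2) (1:ℝ)) =
      lsm F (fun x => lsm (u x) fun s => Finsupp.single (q.1 ++ s.1, q.2 ++ s.2) (1:ℝ)) :=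
    fun q => lsm_lsm _ _ _
  exact Eq.trans (lsm_congr fun q _ => this q) (lsm_comm _ _ _)

/- definitional restatements in `lsm` form -/

lemma mulE_l (f g h : (T d × List (PTm d)) →₀ ℝ) :
    mulE f g h = lsm f fun p => lsm g fun q => lsm h fun s =>
      Finsupp.single (T.prod p.1 q.1 s.1, p.2 ++ q.2 ++ s.2) 1 := by
  unfold mulE lsm
  refine Finsupp.sum_congr fun p _ => ?_
  rw [Finsupp.smul_sum]
  refine Finsupp.sum_congr fun q _ => ?_
  rw [Finsupp.smul_sum, Finsupp.smul_sum]
  refine Finsupp.sum_congr fun s _ => ?_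
  simp only [Finsupp.smul_single, smul_eq_mul, mul_one, mul_assoc]

lemma lsm_mulE (f g h : (T d × List (PTm d)) →₀ ℝ)
    (u : (T d × List (PTm d)) → (β →₀ ℝ)) :
    lsm (mulE f g h) u = lsm f fun p => lsm g fun q => lsm h fun s =>
      u (T.prod p.1 q.1 s.1, p.2 ++ q.2 ++ s.2) := by
  rw [mulE_l, lsm_lsm]
  refine lsm_congr fun p _ => ?_
  rw [lsm_lsm]
  refine lsm_congr fun q _ => ?_
  rw [lsm_lsm]
  refine lsm_congr fun s _ => ?_
  rw [lsm_single, one_smul]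

@[simp] lemma DFm_nil (δ : ℝ) : DFm (d := d) δ [] = Finsupp.single ([], []) 1 := rfl

lemma DFm_cons_l (δ : ℝ) (p : PTm d) (l : List (PTm d)) :
    DFm δ (p :: l) = lsm (DPm δ p) fun q => lsm (DFm δ l) fun s =>
      Finsupp.single (q.1 :: s.1, q.2 ++ s.2) 1 := by
  show ((DPm δ p).sum fun q cq => (DFm δ l).sum fun s cs =>
      Finsupp.single (q.1 :: s.1, q.2 ++ s.2) (cq * cs)) = _
  unfold lsm
  refine Finsupp.sum_congr fun q _ => ?_
  rw [Finsupp.smul_sum]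
  refine Finsupp.sum_congr fun s _ => ?_
  simp [Finsupp.smul_single]

lemma DPm_I_l (δ : ℝ) (τ : T d) :
    DPm δ (PTm.I τ) = lsm (DI δ τ) fun p => Finsupp.single (PTm.I p.1, p.2) 1 := by
  show ((DI δ τ).sum fun p c => Finsupp.single (PTm.I p.1, p.2) c) = _
  unfold lsm
  refine Finsupp.sum_congr fun p _ => ?_
  simp [Finsupp.smul_single]

lemma DFm_singleton (δ : ℝ) (p : PTm d) :
    DFm δ [p] = lsm (DPm δ p) fun q => Finsupp.single ([q.1], q.2) 1 := by
  rw [DFm_cons_l]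
  refine lsm_congr fun q _ => ?_
  rw [DFm_nil, lsm_single, one_smul]
  simp

lemma DFm_append_cv (δ : ℝ) (l₁ l₂ : List (PTm d)) :
    DFm δ (l₁ ++ l₂) = cv (DFm δ l₁) (DFm δ l₂) := by
  induction l₁ with
  | nil =>
      rw [List.nil_append, DFm_nil]
      unfold cv
      rw [lsm_single, one_smul]
      have : (fun s : List (PTm d) × List (PTm d) =>
          Finsupp.single ([] ++ s.1, [] ++ s.2) (1:ℝ)) = fun s => Finsupp.single s 1 := by
        funext s; simp
      rw [this, lsm_single_fun]
  | cons p l₁ ih =>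
      rw [List.cons_append, DFm_cons_l, ih, DFm_cons_l, cv_lsm_left]
      refine lsm_congr fun q _ => ?_
      rw [lsm_cv, cv_lsm_left]
      refine lsm_congr fun u _ => ?_
      rw [cv_single_left]
      refine lsm_congr fun v _ => ?_
      simp

lemma Cminus_prod_prod (x1 x2 x3 y1 y2 y3 : T d) :
    Cminus (T.prod x1 x2 x3) (T.prod y1 y2 y3) =
      oconv (Cminus x1 y1) (Cminus x2 y2) (Cminus x3 y3) := by
  show (match Cminus x1 y1, Cminus x2 y2, Cminus x3 y3 with
    | some f1, some f2, some f3 => some (f1 ++ f2 ++ f3)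
    | _, _, _ => none) = _
  rcases Cminus x1 y1 with _ | f1 <;> rcases Cminus x2 y2 with _ | f2 <;>
    rcases Cminus x3 y3 with _ | f3 <;> rfl

lemma CsO_oconv (o₁ o₂ o₃ : Option (List (PTm d))) (g₁ g₂ g₃ : List (PTm d)) :
    CsO (oconv o₁ o₂ o₃) (g₁ ++ g₂ ++ g₃) =
      cv (cv (CsO o₁ g₁) (CsO o₂ g₂)) (CsO o₃ g₃) := by
  rcases o₁ with _ | f1 <;> rcases o₂ with _ | f2 <;> rcases o₃ with _ | f3 <;>
    simp [oconv, cv_single_single]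

lemma DFmO_oconv (δ : ℝ) (o₁ o₂ o₃ : Option (List (PTm d))) :
    DFmO δ (oconv o₁ o₂ o₃) = cv (cv (DFmO δ o₁) (DFmO δ o₂)) (DFmO δ o₃) := by
  rcases o₁ with _ | f1 <;> rcases o₂ with _ | f2 <;> rcases o₃ with _ | f3 <;>
    simp only [oconv, DFmO_some, DFmO_none, DFm_append_cv, cv_zero_left, cv_zero_right]

end Bridge

section LowOrder

variable {d : ℕ} {δ : ℝ}

lemma order_gt_neg3 (hδ : 0 < δ) : ∀ τ : T d, -3 < T.order δ τ := by
  intro τ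
  induction τ with
  | one => norm_num [T.order]
  | X i => norm_num [T.order]
  | Xi => simp only [T.order]; linarith
  | prod a b c iha ihb ihc => simp only [T.order]; linarith

/-- `τ` is "primitive": either `Ξ` or a product of order `< -2`. -/
def lowT (δ : ℝ) (ρ : T d) : Prop := T.order δ ρ < -2 ∨ ρ = T.Xi

lemma comps_low (hδ : 0 < δ) {x y z : T d}
    (h : T.order δ (T.prod x y z) < -2) :
    T.order δ x < -2 ∧ T.order δ y < -2 ∧ T.order δ z < -2 := by
  have hx := order_gt_neg3 (d := d) hδ x
  have hy := order_gt_neg3 (d := d) hδ y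
  have hz := order_gt_neg3 (d := d) hδ z
  simp only [T.order] at h
  exact ⟨by linarith, by linarith, by linarith⟩

lemma DI_low (ρ : T d) (h : lowT δ ρ) : DI δ ρ = Finsupp.single (ρ, []) 1 := by
  cases ρ with
  | one =>
      rcases h with h | h
      · norm_num [T.order] at h
      · exact absurd h (by simp)
  | X i =>
      rcases h with h | h
      · norm_num [T.order] at h
      · exact absurd h (by simp)
  | Xi => rfl
  | prod a b c =>
      rcases h with h | h
      · rw [DI, if_pos h]
      · exact absurd h (by simp)

lemma mulE_single (x y z : T d × List (PTm d)) (cx cy cz : ℝ) :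
    mulE (Finsupp.single x cx) (Finsupp.single y cy) (Finsupp.single z cz) =
      Finsupp.single (T.prod x.1 y.1 z.1, x.2 ++ y.2 ++ z.2) (cx * cy * cz) := by
  rw [mulE_l, lsm_single, lsm_single, lsm_single]
  simp only [Finsupp.smul_single, smul_eq_mul, mul_one, mul_assoc]

lemma Du_low (hδ : 0 < δ) (ρ : T d) (h : lowT δ ρ) :
    Du δ ρ = Finsupp.single (ρ, []) 1 := by
  cases ρ with
  | one =>
      rcases h with h | h
      · norm_num [T.order] at h
      · exact absurd h (by simp)
  | X i =>
      rcases h with h | h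
      · norm_num [T.order] at h
      · exact absurd h (by simp)
  | Xi => rfl
  | prod a b c =>
      have hlow : T.order δ (T.prod a b c) < -2 := by
        rcases h with h | h
        · exact h
        · exact absurd h (by simp)
      obtain ⟨ha, hb, hc⟩ := comps_low hδ hlow
      show mulE (DI δ a) (DI δ b) (DI δ c) = _
      rw [DI_low a (Or.inl ha), DI_low b (Or.inl hb), DI_low c (Or.inl hc),
        mulE_single]
      simp

lemma not_inTildeN_low (ρ : T d) (h : T.order δ ρ < -2) : ¬ T.inTildeN δ ρ := by
  intro hin
  rcases hin with ⟨_, h1, _⟩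
  linarith

lemma imSum_single (i : Fin d) (x : T d × List (PTm d)) (c : ℝ) :
    ((Finsupp.single x c).sum fun p cc =>
      match imEmb i p.1 with
      | some q => Finsupp.single (q, p.2) cc
      | none => (0 : (PTm d × List (PTm d)) →₀ ℝ)) =
    (match imEmb i x.1 with
      | some q => Finsupp.single (q, x.2) c
      | none => 0) :=
  Finsupp.sum_single_index (by cases h : imEmb i x.1 <;> simp [h])

lemma DPm_Im_Xi_eq (i : Fin d) :
    DPm δ (PTm.Im i (T.Xi : T d)) =
      ((Du δ (T.Xi : T d)).sum fun p c =>
        match imEmb i p.1 with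
        | some q => Finsupp.single (q, p.2) c
        | none => 0) +
      (if T.inTildeN δ (T.Xi : T d) then
        Finsupp.single (PTm.Ip i (T.X i), [PTm.Ip i (T.Xi : T d)]) 1 else 0) := rfl

lemma Du_Xi : Du (d := d) δ T.Xi = Finsupp.single (T.Xi, []) 1 := rfl

lemma DPm_Im_Xi (i : Fin d) :
    DPm δ (PTm.Im i (T.Xi : T d)) = Finsupp.single (PTm.Im i T.Xi, ([] : List (PTm d))) 1 := by
  rw [DPm_Im_Xi_eq, if_neg (by simp [T.inTildeN, T.isProd]), add_zero, Du_Xi,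
    imSum_single]
  simp [imEmb]

lemma DPm_Im_prod (i : Fin d) (x y z : T d) :
    DPm δ (PTm.Im i (T.prod x y z)) =
      ((Du δ (T.prod x y z)).sum fun p c =>
        match imEmb i p.1 with
        | some q => Finsupp.single (q, p.2) c
        | none => 0) +
      (if T.inTildeN δ (T.prod x y z) then
        Finsupp.single (PTm.Ip i (T.X i), [PTm.Ip i (T.prod x y z)]) 1 else 0) := rfl

lemma DPm_Im_prod_low (hδ : 0 < δ) (i : Fin d) (x y z : T d)
    (h : T.order δ (T.prod x y z) < -2) :
    DPm δ (PTm.Im i (T.prod x y z)) =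
      Finsupp.single (PTm.Im i (T.prod x y z), ([] : List (PTm d))) 1 := by
  rw [DPm_Im_prod, if_neg (not_inTildeN_low _ h), add_zero,
    Du_low hδ _ (Or.inl h), imSum_single]
  simp [imEmb]

lemma Cminus_one (ρ : T d) : Cminus T.one ρ = some [PTm.I ρ] := by
  cases ρ <;> rfl

/-- `DFm` on a cut forest of a primitive tree is group-like. -/
lemma lowDFm (hδ : 0 < δ) :
    ∀ (σ ρ : T d) (f : List (PTm d)), lowT δ ρ → Cminus σ ρ = some f →
      DFm δ f = Finsupp.single (f, []) 1 := by
  intro σ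
  induction σ with
  | one =>
      intro ρ f hρ hc
      rw [Cminus_one] at hc
      cases hc
      rw [DFm_singleton, DPm_I_l, DI_low ρ hρ, lsm_single, one_smul, lsm_single,
        one_smul]
  | X i =>
      intro ρ f hρ hc
      cases ρ with
      | one => exact absurd hc (by simp [Cminus])
      | X j =>
          rcases hρ with h | h
          · norm_num [T.order] at h
          · exact absurd h (by simp)
      | Xi =>
          have : f = [PTm.Im i T.Xi] := by
            simpa [Cminus] using hc.symm
          subst this
          rw [DFm_singleton, DPm_Im_Xi, lsm_single, one_smul]
      | prod x y z =>
          have : f = [PTm.Im i (T.prod x y z)] := by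
            simpa [Cminus] using hc.symm
          subst this
          have hlow : T.order δ (T.prod x y z) < -2 := by
            rcases hρ with h | h
            · exact h
            · exact absurd h (by simp)
          rw [DFm_singleton, DPm_Im_prod_low hδ i x y z hlow, lsm_single, one_smul]
  | Xi =>
      intro ρ f hρ hc
      cases ρ with
      | one => exact absurd hc (by simp [Cminus])
      | X j => exact absurd hc (by simp [Cminus])
      | Xi =>
          have : f = [] := by simpa [Cminus] using hc.symm
          subst this
          rfl
      | prod x y z => exact absurd hc (by simp [Cminus])
  | prod s₁ s₂ s₃ ih₁ ih₂ ih₃ =>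
      intro ρ f hρ hc
      cases ρ with
      | one => exact absurd hc (by simp [Cminus])
      | X j => exact absurd hc (by simp [Cminus])
      | Xi => exact absurd hc (by simp [Cminus])
      | prod x y z =>
          have hlow : T.order δ (T.prod x y z) < -2 := by
            rcases hρ with h | h
            · exact h
            · exact absurd h (by simp)
          obtain ⟨hx, hy, hz⟩ := comps_low hδ hlow
          rw [Cminus_prod_prod] at hc
          rcases h1 : Cminus s₁ x with _ | f₁ <;> rcases h2 : Cminus s₂ y with _ | f₂ <;>
            rcases h3 : Cminus s₃ z with _ | f₃ <;>
              rw [h1, h2, h3] at hc <;> simp [oconv] at hc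
          subst hc
          rw [DFm_append_cv, DFm_append_cv,
            ih₁ x f₁ (Or.inl hx) h1, ih₂ y f₂ (Or.inl hy) h2, ih₃ z f₃ (Or.inl hz) h3,
            cv_single_single, cv_single_single]
          simp
end LowOrder

section LemC

variable {d : ℕ} {δ : ℝ} {α β : Type*}

lemma lsm_ite (P : Prop) [Decidable P] (A : α →₀ ℝ) (u : α → β →₀ ℝ) :
    lsm (if P then A else 0) u = if P then lsm A u else 0 := by
  split <;> simp [lsm_zero]

lemma imPart_lsm (i : Fin d) (X : (T d × List (PTm d)) →₀ ℝ) :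
    (X.sum fun p c =>
      match imEmb i p.1 with
      | some q => Finsupp.single (q, p.2) c
      | none => 0) =
    lsm X (fun p =>
      match imEmb i p.1 with
      | some q => Finsupp.single (q, p.2) 1
      | none => 0) := by
  unfold lsm
  refine Finsupp.sum_congr fun p _ => ?_
  cases h : imEmb i p.1 <;> simp [h, Finsupp.smul_single]

lemma Du_prod_eq (x y z : T d) :
    Du δ (T.prod x y z) = mulE (DI δ x) (DI δ y) (DI δ z) := rfl

lemma lsm_DI_X (i : Fin d) (u : (T d × List (PTm d)) → β →₀ ℝ) :
    lsm (DI δ (T.X i)) u =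
      u (T.one, [PTm.I (T.X i)]) + u (T.X i, [PTm.Ip i (T.X i)]) := by
  rw [show DI δ (T.X i) = Finsupp.single (T.one, [PTm.I (T.X i)]) 1 +
      Finsupp.single (T.X i, [PTm.Ip i (T.X i)]) 1 from by rw [DI],
    lsm_add, lsm_single, lsm_single, one_smul, one_smul]

lemma lsm_DI_prod_high {a b c : T d} (h : ¬ T.order δ (T.prod a b c) < -2)
    (u : (T d × List (PTm d)) → β →₀ ℝ) :
    lsm (DI δ (T.prod a b c)) u =
      u (T.one, [PTm.I (T.prod a b c)]) +
      (if T.inTildeN δ (T.prod a b c) then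
        ∑ j : Fin d, u (T.X j, [PTm.Ip j (T.prod a b c)]) else 0) +
      (lsm (DI δ a) fun p => lsm (DI δ b) fun q => lsm (DI δ c) fun s =>
        u (T.prod p.1 q.1 s.1, p.2 ++ q.2 ++ s.2)) := by
  rw [show DI δ (T.prod a b c) =
      Finsupp.single (T.one, [PTm.I (T.prod a b c)]) 1 +
        (if T.inTildeN δ (T.prod a b c) then
          ∑ i : Fin d, Finsupp.single (T.X i, [PTm.Ip i (T.prod a b c)]) 1
        else 0) +
        mulE (DI δ a) (DI δ b) (DI δ c) from by rw [DI, if_neg h],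
    lsm_add, lsm_add, lsm_single, one_smul, lsm_ite, lsm_finset_sum, lsm_mulE]
  congr 2
  split
  · exact Finset.sum_congr rfl fun j _ => by rw [lsm_single, one_smul]
  · rfl

lemma triple_zero (A B C : (T d × List (PTm d)) →₀ ℝ) :
    (lsm A fun _ => lsm B fun _ => lsm C fun _ => (0 : β →₀ ℝ)) = 0 := by
  simp [lsm_zero_fun]

/-- The planted co-interaction identity. -/
lemma lemC (hδ : 0 < δ) (σ : T d) : ∀ ρ : T d,
    DFmO δ (Cminus σ ρ) = lsm (DI δ ρ) fun p => CsO (Cminus σ p.1) p.2 := by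
  induction σ with
  | one =>
      intro ρ
      rw [Cminus_one, DFmO_some, DFm_singleton, DPm_I_l, lsm_lsm]
      refine lsm_congr fun p _ => ?_
      rw [lsm_single, one_smul, Cminus_one, CsO_some]
  | X i =>
      intro ρ
      cases ρ with
      | one =>
          rw [show Cminus (T.X i) T.one = none from rfl, DFmO_none,
            show DI δ T.one = Finsupp.single (T.one, [PTm.I T.one]) 1 from by rw [DI],
            lsm_single, one_smul, show Cminus (T.X i) T.one = none from rfl, CsO_none]
      | X j =>
          by_cases hji : j = i
          · subst hji
            rw [show Cminus (T.X j) (T.X j) = some [PTm.Ip j (T.X j)] from by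
                simp [Cminus], DFmO_some, DFm_singleton,
              show DPm δ (PTm.Ip j (T.X j)) = DIp δ j (T.X j) from rfl,
              show DIp δ j (T.X j) =
                Finsupp.single (PTm.Ip j (T.X j), [PTm.Ip j (T.X j)]) 1 from by
                simp [DIp],
              lsm_single, one_smul, lsm_DI_X]
            rw [show Cminus (T.X j) T.one = none from rfl, CsO_none,
              show Cminus (T.X j) (T.X j) = some [PTm.Ip j (T.X j)] from by
                simp [Cminus], CsO_some, zero_add]
          · rw [show Cminus (T.X i) (T.X j) = none from by simp [Cminus, hji],
              DFmO_none, lsm_DI_X,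
              show Cminus (T.X i) T.one = none from rfl, CsO_none,
              show Cminus (T.X i) (T.X j) = none from by simp [Cminus, hji],
              CsO_none, add_zero]
      | Xi =>
          rw [show Cminus (T.X i) T.Xi = some [PTm.Im i T.Xi] from rfl, DFmO_some,
            DFm_singleton, DPm_Im_Xi, lsm_single, one_smul,
            show DI δ T.Xi = Finsupp.single (T.Xi, []) 1 from by rw [DI],
            lsm_single, one_smul,
            show Cminus (T.X i) T.Xi = some [PTm.Im i T.Xi] from rfl, CsO_some]
      | prod x y z =>
          by_cases hlow : T.order δ (T.prod x y z) < -2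
          · rw [show Cminus (T.X i) (T.prod x y z) =
                some [PTm.Im i (T.prod x y z)] from rfl, DFmO_some, DFm_singleton,
              DPm_Im_prod_low hδ i x y z hlow, lsm_single, one_smul,
              DI_low _ (Or.inl hlow), lsm_single, one_smul,
              show Cminus (T.X i) (T.prod x y z) =
                some [PTm.Im i (T.prod x y z)] from rfl, CsO_some]
          · rw [show Cminus (T.X i) (T.prod x y z) =
                some [PTm.Im i (T.prod x y z)] from rfl, DFmO_some, DFm_singleton,
              DPm_Im_prod, imPart_lsm, lsm_add, lsm_lsm, lsm_ite,
              lsm_DI_prod_high hlow]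
            rw [show Cminus (T.X i) T.one = none from rfl, CsO_none, zero_add]
            have hX : (if T.inTildeN δ (T.prod x y z) then
                ∑ j : Fin d, CsO (Cminus (T.X i) ((T.X j : T d))) [PTm.Ip j (T.prod x y z)]
              else 0) =
              (if T.inTildeN δ (T.prod x y z) then
                Finsupp.single (([PTm.Ip i (T.X i)] : List (PTm d)),
                  [PTm.Ip i (T.prod x y z)]) 1 else 0) := by
              congr 1
              rw [Finset.sum_eq_single_of_mem i (Finset.mem_univ i)]
              · simp [Cminus]
              · intro j _ hj
                simp [Cminus, hj]
            rw [hX]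
            have hIte : (if T.inTildeN δ (T.prod x y z) then
                lsm (Finsupp.single (PTm.Ip i (T.X i), [PTm.Ip i (T.prod x y z)]) (1:ℝ))
                  (fun q => Finsupp.single (([q.1] : List (PTm d)), q.2) (1:ℝ)) else 0) =
              (if T.inTildeN δ (T.prod x y z) then
                Finsupp.single (([PTm.Ip i (T.X i)] : List (PTm d)),
                  [PTm.Ip i (T.prod x y z)]) 1 else 0) := by
              congr 1
              rw [lsm_single, one_smul]
            rw [hIte]
            have hDu : lsm (Du δ (T.prod x y z)) (fun p =>
                lsm (match imEmb i p.1 with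
                  | some q => Finsupp.single (q, p.2) (1:ℝ)
                  | none => 0)
                (fun q => Finsupp.single (([q.1] : List (PTm d)), q.2) (1:ℝ))) =
              (lsm (DI δ x) fun p => lsm (DI δ y) fun q => lsm (DI δ z) fun s =>
                CsO (Cminus (T.X i) (T.prod p.1 q.1 s.1)) (p.2 ++ q.2 ++ s.2)) := by
              rw [Du_prod_eq, lsm_mulE]
              refine lsm_congr fun p _ => lsm_congr fun q _ => lsm_congr fun s _ => ?_
              show lsm (Finsupp.single
                  (PTm.Im i (T.prod p.1 q.1 s.1), p.2 ++ q.2 ++ s.2) (1:ℝ))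
                  (fun q => Finsupp.single (([q.1] : List (PTm d)), q.2) (1:ℝ)) =
                Finsupp.single (([PTm.Im i (T.prod p.1 q.1 s.1)] : List (PTm d)),
                  p.2 ++ q.2 ++ s.2) (1:ℝ)
              rw [lsm_single, one_smul]
            rw [hDu, add_comm]
  | Xi =>
      intro ρ
      cases ρ with
      | one =>
          rw [show Cminus (T.Xi : T d) T.one = none from rfl, DFmO_none,
            show DI δ T.one = Finsupp.single (T.one, [PTm.I T.one]) 1 from by rw [DI],
            lsm_single, one_smul, show Cminus (T.Xi : T d) T.one = none from rfl,
            CsO_none]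
      | X j =>
          rw [show Cminus (T.Xi : T d) (T.X j) = none from rfl, DFmO_none, lsm_DI_X,
            show Cminus (T.Xi : T d) T.one = none from rfl, CsO_none,
            show Cminus (T.Xi : T d) (T.X j) = none from rfl, CsO_none, add_zero]
      | Xi =>
          rw [show Cminus (T.Xi : T d) T.Xi = some [] from rfl, DFmO_some, DFm_nil,
            show DI δ T.Xi = Finsupp.single (T.Xi, []) 1 from by rw [DI],
            lsm_single, one_smul,
            show Cminus (T.Xi : T d) T.Xi = some [] from rfl, CsO_some]
      | prod x y z =>
          rw [show Cminus (T.Xi : T d) (T.prod x y z) = none from rfl, DFmO_none]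
          by_cases hlow : T.order δ (T.prod x y z) < -2
          · rw [DI_low _ (Or.inl hlow), lsm_single, one_smul,
              show Cminus (T.Xi : T d) (T.prod x y z) = none from rfl, CsO_none]
          · rw [lsm_DI_prod_high hlow,
              show Cminus (T.Xi : T d) T.one = none from rfl, CsO_none, zero_add]
            have h1 : (if T.inTildeN δ (T.prod x y z) then
                ∑ j : Fin d, CsO (Cminus (T.Xi : T d) (T.X j)) [PTm.Ip j (T.prod x y z)]
              else 0) = (0 : (List (PTm d) × List (PTm d)) →₀ ℝ) := by
              split <;> simp [Cminus]
            have h2 : (lsm (DI δ x) fun p => lsm (DI δ y) fun q => lsm (DI δ z) fun s =>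
                CsO (Cminus (T.Xi : T d) (T.prod p.1 q.1 s.1)) (p.2 ++ q.2 ++ s.2)) =
                (0 : (List (PTm d) × List (PTm d)) →₀ ℝ) :=
              triple_zero (DI δ x) (DI δ y) (DI δ z)
            rw [h1, h2, add_zero]
  | prod s₁ s₂ s₃ ih₁ ih₂ ih₃ =>
      intro ρ
      cases ρ with
      | one =>
          rw [show Cminus (T.prod s₁ s₂ s₃) T.one = none from rfl, DFmO_none,
            show DI δ T.one = Finsupp.single (T.one, [PTm.I T.one]) 1 from by rw [DI],
            lsm_single, one_smul,
            show Cminus (T.prod s₁ s₂ s₃) T.one = none from rfl, CsO_none]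
      | X j =>
          rw [show Cminus (T.prod s₁ s₂ s₃) (T.X j) = none from rfl, DFmO_none,
            lsm_DI_X, show Cminus (T.prod s₁ s₂ s₃) T.one = none from rfl, CsO_none,
            show Cminus (T.prod s₁ s₂ s₃) (T.X j) = none from rfl, CsO_none, add_zero]
      | Xi =>
          rw [show Cminus (T.prod s₁ s₂ s₃) T.Xi = none from rfl, DFmO_none,
            show DI δ T.Xi = Finsupp.single (T.Xi, []) 1 from by rw [DI],
            lsm_single, one_smul,
            show Cminus (T.prod s₁ s₂ s₃) T.Xi = none from rfl, CsO_none]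
      | prod x y z =>
          by_cases hlow : T.order δ (T.prod x y z) < -2
          · -- primitive case
            rw [DI_low _ (Or.inl hlow), lsm_single, one_smul, Cminus_prod_prod]
            obtain ⟨hx, hy, hz⟩ := comps_low hδ hlow
            rcases h1 : Cminus s₁ x with _ | f₁ <;> rcases h2 : Cminus s₂ y with _ | f₂ <;>
              rcases h3 : Cminus s₃ z with _ | f₃ <;>
                simp only [oconv, DFmO_none, DFmO_some, CsO_none, CsO_some] <;>
                  try rfl
            rw [DFm_append_cv, DFm_append_cv,
              lowDFm hδ s₁ x f₁ (Or.inl hx) h1, lowDFm hδ s₂ y f₂ (Or.inl hy) h2,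
              lowDFm hδ s₃ z f₃ (Or.inl hz) h3, cv_single_single, cv_single_single]
            simp
          · rw [Cminus_prod_prod, DFmO_oconv, ih₁ x, ih₂ y, ih₃ z,
              cv_lsm_left, cv_lsm_left, lsm_DI_prod_high hlow]
            rw [show Cminus (T.prod s₁ s₂ s₃) T.one = none from rfl, CsO_none, zero_add]
            have hXs : (if T.inTildeN δ (T.prod x y z) then
                ∑ j : Fin d, CsO (Cminus (T.prod s₁ s₂ s₃) (T.X j))
                  [PTm.Ip j (T.prod x y z)] else 0) =
                (0 : (List (PTm d) × List (PTm d)) →₀ ℝ) := by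
              split <;> simp [Cminus]
            rw [hXs, zero_add]
            refine lsm_congr fun p _ => ?_
            rw [cv_lsm_right (DI δ y), cv_lsm_left]
            refine lsm_congr fun q _ => ?_
            rw [cv_lsm_right (DI δ z)]
            refine lsm_congr fun s _ => ?_
            show cv (cv (CsO (Cminus s₁ p.1) p.2) (CsO (Cminus s₂ q.1) q.2))
                (CsO (Cminus s₃ s.1) s.2) =
              CsO (Cminus (T.prod s₁ s₂ s₃) (T.prod p.1 q.1 s.1)) (p.2 ++ q.2 ++ s.2)
            rw [Cminus_prod_prod, CsO_oconv]

end LemC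

section Subs

variable {d : ℕ} {δ : ℝ}

lemma one_mem_subs : ∀ τ : T d, T.one ∈ subs τ := by
  intro τ; cases τ <;> simp [subs]

lemma X_mem_subs_prod (j : Fin d) (a b c : T d) : T.X j ∈ subs (T.prod a b c) := by
  simp [subs]

lemma X_mem_subs_Xi (j : Fin d) : T.X j ∈ subs (T.Xi : T d) := by
  simp [subs]

lemma subs_refl : ∀ τ : T d, τ ∈ subs τ := by
  intro τ
  induction τ with
  | one => simp [subs]
  | X i => simp [subs]
  | Xi => simp [subs]
  | prod a b c iha ihb ihc =>
      simp only [subs, Finset.mem_union, Finset.mem_image, Finset.mem_product]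
      exact Or.inr ⟨(a, b, c), ⟨iha, ihb, ihc⟩, rfl⟩

lemma subs_mono : ∀ ρ σ : T d, σ ∈ subs ρ → subs σ ⊆ subs ρ := by
  intro ρ
  induction ρ with
  | one =>
      intro σ h
      simp [subs] at h
      subst h
      exact Finset.Subset.refl _
  | X i =>
      intro σ h
      simp [subs] at h
      rcases h with h | h
      · subst h
        intro t ht
        simp [subs] at ht
        subst ht
        exact one_mem_subs _
      · subst h
        exact Finset.Subset.refl _
  | Xi =>
      intro σ h
      simp [subs] at h
      rcases h with h | h | ⟨j, h⟩
      · subst h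
        intro t ht
        simp [subs] at ht
        subst ht
        exact one_mem_subs _
      · subst h
        exact Finset.Subset.refl _
      · subst h
        intro t ht
        simp [subs] at ht
        rcases ht with h' | h'
        · subst h'; exact one_mem_subs _
        · subst h'; exact X_mem_subs_Xi _
  | prod a b c iha ihb ihc =>
      intro σ h
      simp only [subs, Finset.mem_union, Finset.mem_image, Finset.mem_product,
        Finset.mem_singleton, Finset.mem_univ, true_and] at h
      rcases h with (h | ⟨j, h⟩) | ⟨⟨p, q, s⟩, ⟨hp, hq, hs⟩, h⟩ <;> subst h <;>
        intro t ht
      · simp [subs] at ht; subst ht; exact one_mem_subs _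
      · simp [subs] at ht
        rcases ht with h | h
        · subst h; exact one_mem_subs _
        · subst h; exact X_mem_subs_prod _ _ _ _
      · simp only [subs, Finset.mem_union, Finset.mem_image, Finset.mem_product,
          Finset.mem_singleton, Finset.mem_univ, true_and] at ht ⊢
        rcases ht with (h | h) | ⟨⟨u, v, w⟩, ⟨hu, hv, hw⟩, h⟩
        · exact Or.inl (Or.inl h)
        · exact Or.inl (Or.inr h)
        · exact Or.inr ⟨(u, v, w), ⟨iha p hp hu, ihb q hq hv, ihc s hs hw⟩, h⟩

lemma subs_prod_mono {p q s a b c : T d} (hp : p ∈ subs a) (hq : q ∈ subs b)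
    (hs : s ∈ subs c) : subs (T.prod p q s) ⊆ subs (T.prod a b c) := by
  intro t ht
  simp only [subs, Finset.mem_union, Finset.mem_image, Finset.mem_product,
    Finset.mem_singleton, Finset.mem_univ, true_and] at ht ⊢
  rcases ht with (h | h) | ⟨⟨u, v, w⟩, ⟨hu, hv, hw⟩, h⟩
  · exact Or.inl (Or.inl h)
  · exact Or.inl (Or.inr h)
  · exact Or.inr ⟨(u, v, w), ⟨subs_mono a p hp hu, subs_mono b q hq hv,
      subs_mono c s hs hw⟩, h⟩

lemma Cminus_mem : ∀ ρ σ : T d, ∀ f : List (PTm d),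
    Cminus σ ρ = some f → σ ∈ subs ρ := by
  intro ρ
  induction ρ with
  | one =>
      intro σ f h
      cases σ with
      | one => exact one_mem_subs _
      | X i => exact absurd h (by simp [Cminus])
      | Xi => exact absurd h (by simp [Cminus])
      | prod x y z => exact absurd h (by simp [Cminus])
  | X j =>
      intro σ f h
      cases σ with
      | one => exact one_mem_subs _
      | X i =>
          by_cases hji : j = i
          · subst hji; simp [subs]
          · rw [show Cminus (T.X i) (T.X j) = none from by simp [Cminus, hji]] at h
            exact absurd h (by simp)
      | Xi => exact absurd h (by simp [Cminus])
      | prod x y z => exact absurd h (by simp [Cminus])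
  | Xi =>
      intro σ f h
      cases σ with
      | one => exact one_mem_subs _
      | X i => exact X_mem_subs_Xi i
      | Xi => simp [subs]
      | prod x y z => exact absurd h (by simp [Cminus])
  | prod x y z ihx ihy ihz =>
      intro σ f h
      cases σ with
      | one => exact one_mem_subs _
      | X i => exact X_mem_subs_prod i x y z
      | Xi => exact absurd h (by simp [Cminus])
      | prod s₁ s₂ s₃ =>
          rw [Cminus_prod_prod] at h
          rcases h1 : Cminus s₁ x with _ | f₁ <;> rcases h2 : Cminus s₂ y with _ | f₂ <;>
            rcases h3 : Cminus s₃ z with _ | f₃ <;> rw [h1, h2, h3] at h <;>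
              simp [oconv] at h
          simp only [subs, Finset.mem_union, Finset.mem_image, Finset.mem_product,
            Finset.mem_singleton, Finset.mem_univ, true_and]
          exact Or.inr ⟨(s₁, s₂, s₃), ⟨ihx s₁ f₁ h1, ihy s₂ f₂ h2, ihz s₃ f₃ h3⟩, rfl⟩

lemma DI_supp (hδ : 0 < δ) : ∀ a : T d, ∀ p ∈ (DI δ a).support, p.1 ∈ subs a := by
  intro a
  induction a with
  | one =>
      intro p hp
      have := Finsupp.support_single_subset hp
      simp at this
      subst this
      exact one_mem_subs _
  | X i =>
      intro p hp
      rcases Finset.mem_union.1 (Finsupp.support_add hp) with h | h <;>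
        have := Finsupp.support_single_subset h <;> simp at this <;> subst this <;>
          simp [subs]
  | Xi =>
      intro p hp
      have := Finsupp.support_single_subset hp
      simp at this
      subst this
      simp [subs]
  | prod a b c iha ihb ihc =>
      intro p hp
      by_cases hlow : T.order δ (T.prod a b c) < -2
      · rw [DI_low _ (Or.inl hlow)] at hp
        have := Finsupp.support_single_subset hp
        simp at this
        subst this
        exact subs_refl _
      · rw [show DI δ (T.prod a b c) =
            Finsupp.single (T.one, [PTm.I (T.prod a b c)]) 1 +
              (if T.inTildeN δ (T.prod a b c) then
                ∑ i : Fin d, Finsupp.single (T.X i, [PTm.Ip i (T.prod a b c)]) 1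
              else 0) +
              mulE (DI δ a) (DI δ b) (DI δ c) from by rw [DI, if_neg hlow]] at hp
        rcases Finset.mem_union.1 (Finsupp.support_add hp) with h | h
        · rcases Finset.mem_union.1 (Finsupp.support_add h) with h' | h'
          · have := Finsupp.support_single_subset h'
            simp at this
            subst this
            exact one_mem_subs _
          · by_cases hN : T.inTildeN δ (T.prod a b c)
            · rw [if_pos hN] at h'
              rcases Finset.mem_biUnion.1 (Finsupp.support_finset_sum h') with
                ⟨j, _, hj⟩
              have := Finsupp.support_single_subset hj
              simp at this
              subst this
              exact X_mem_subs_prod j a b c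
            · rw [if_neg hN] at h'
              simp at h'
        · rw [mulE_l] at h
          rcases lsm_support h with ⟨u, hu, h'⟩
          rcases lsm_support h' with ⟨v, hv, h''⟩
          rcases lsm_support h'' with ⟨w, hw, h'''⟩
          have := Finsupp.support_single_subset h'''
          simp only [Finset.mem_singleton] at this
          subst this
          simp only [subs, Finset.mem_union, Finset.mem_image, Finset.mem_product,
            Finset.mem_singleton, Finset.mem_univ, true_and]
          exact Or.inr ⟨(u.1, v.1, w.1), ⟨iha u hu, ihb v hv, ihc w hw⟩, rfl⟩

/-- the co-interaction identity for product cuts, expanded form. -/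
lemma master (hδ : 0 < δ) (σ₁ σ₂ σ₃ x y z : T d) :
    DFmO δ (Cminus (T.prod σ₁ σ₂ σ₃) (T.prod x y z)) =
      lsm (DI δ x) fun p => lsm (DI δ y) fun q => lsm (DI δ z) fun s =>
        CsO (Cminus (T.prod σ₁ σ₂ σ₃) (T.prod p.1 q.1 s.1)) (p.2 ++ q.2 ++ s.2) := by
  rw [Cminus_prod_prod, DFmO_oconv, lemC hδ σ₁ x, lemC hδ σ₂ y, lemC hδ σ₃ z,
    cv_lsm_left, cv_lsm_left]
  refine lsm_congr fun p _ => ?_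
  rw [cv_lsm_right (DI δ y), cv_lsm_left]
  refine lsm_congr fun q _ => ?_
  rw [cv_lsm_right (DI δ z)]
  refine lsm_congr fun s _ => ?_
  show cv (cv (CsO (Cminus σ₁ p.1) p.2) (CsO (Cminus σ₂ q.1) q.2))
      (CsO (Cminus σ₃ s.1) s.2) =
    CsO (Cminus (T.prod σ₁ σ₂ σ₃) (T.prod p.1 q.1 s.1)) (p.2 ++ q.2 ++ s.2)
  rw [Cminus_prod_prod, CsO_oconv]

end Subs

section Assemble

variable {d : ℕ} {δ : ℝ}

noncomputable def CsL (o : Option (List (PTm d))) : List (PTm d) →₀ ℝ :=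
  match o with
  | some f => Finsupp.single f 1
  | none => 0

lemma Rmap_prod (r : T d → ℝ) (a b c : T d) :
    Rmap r (T.prod a b c) = Finsupp.single [PTm.I a, PTm.I b, PTm.I c] 1 +
      ∑ τ' ∈ subs (T.prod a b c), r τ' • CsL (Cminus τ' (T.prod a b c)) := rfl

lemma lsm_CsL_DFm (o : Option (List (PTm d))) :
    lsm (CsL o) (fun f => DFm δ f) = DFmO δ o := by
  cases o with
  | none => exact lsm_zero _
  | some f =>
      rw [show CsL (some f) = Finsupp.single f 1 from rfl, lsm_single, one_smul]
      rfl

lemma lsm_CsL_single (o : Option (List (PTm d))) (g : List (PTm d)) :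
    lsm (CsL o) (fun f =>
      Finsupp.single ((f, g) : List (PTm d) × List (PTm d)) (1 : ℝ)) = CsO o g := by
  cases o with
  | none => exact lsm_zero _
  | some f =>
      rw [show CsL (some f) = Finsupp.single f 1 from rfl, lsm_single, one_smul]
      rfl

lemma sum_single_eq_lsm (F : List (PTm d) →₀ ℝ) (g : List (PTm d)) :
    (F.sum fun f cf =>
      Finsupp.single ((f, g) : List (PTm d) × List (PTm d)) cf) =
      lsm F (fun f => Finsupp.single (f, g) 1) := by
  unfold lsm
  refine Finsupp.sum_congr fun f _ => ?_
  simp [Finsupp.smul_single]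

lemma DFm_I_cons (τ : T d) (l : List (PTm d)) :
    DFm δ (PTm.I τ :: l) = lsm (DI δ τ) fun p => lsm (DFm δ l) fun s =>
      Finsupp.single (PTm.I p.1 :: s.1, p.2 ++ s.2) 1 := by
  rw [DFm_cons_l, DPm_I_l, lsm_lsm]
  refine lsm_congr fun p _ => ?_
  show lsm (Finsupp.single (PTm.I p.1, p.2) (1:ℝ)) (fun q => lsm (DFm δ l) fun s =>
    Finsupp.single (q.1 :: s.1, q.2 ++ s.2) 1) = _
  rw [lsm_single, one_smul]

lemma DFm_three (τ₁ τ₂ τ₃ : T d) :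
    DFm δ [PTm.I τ₁, PTm.I τ₂, PTm.I τ₃] =
      lsm (DI δ τ₁) fun p => lsm (DI δ τ₂) fun q => lsm (DI δ τ₃) fun s =>
        Finsupp.single (([PTm.I p.1, PTm.I q.1, PTm.I s.1] : List (PTm d)),
          p.2 ++ q.2 ++ s.2) 1 := by
  rw [DFm_I_cons]
  refine lsm_congr fun p _ => ?_
  rw [DFm_I_cons, lsm_lsm]
  refine lsm_congr fun q _ => ?_
  rw [lsm_lsm, DFm_I_cons, lsm_lsm]
  refine lsm_congr fun s _ => ?_
  simp [DFm_nil, lsm_single]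

end Assemble


set_option maxHeartbeats 1000000 in
/-- the coproduct intertwines with a local renormalisation
operator `R` built from a permutation-invariant counterterm map `r` supported
on `𝒬`: for every ternary-product tree `τ ∈ 𝒩̊ ∪ 𝒲̊`, `Δ R τ = (R ⊗ Id) Δ τ`. -/
theorem coproduct_renormalisation_commute (d : ℕ) (δ : ℝ) (hδ : 0 < δ)
    (r : T d → ℝ)
    (hsupp : ∀ τ : T d, r τ ≠ 0 → Qcond δ τ)
    (hperm : ∀ τ τ' : T d, TEquiv τ τ' → r τ = r τ')
    (a b c : T d) (h : T.order δ (T.prod a b c) ≤ 0) :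
    ((Rmap r (T.prod a b c)).sum fun f cf => cf • DFm δ f) =
      ((Du δ (T.prod a b c)).sum fun p cp =>
        cp • ((Rmap r p.1).sum fun f cf =>
          Finsupp.single (f, p.2) cf)) := by
  classical
  show lsm (Rmap r (T.prod a b c)) (fun f => DFm δ f) =
    lsm (Du δ (T.prod a b c)) (fun p =>
      (Rmap r p.1).sum fun f cf => Finsupp.single (f, p.2) cf)
  have hL : ∀ τ' : T d,
      lsm (r τ' • CsL (Cminus τ' (T.prod a b c))) (fun f => DFm δ f) =
      r τ' • DFmO δ (Cminus τ' (T.prod a b c)) := fun τ' => by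
    rw [lsm_smul, lsm_CsL_DFm]
  have hLs : lsm (Rmap r (T.prod a b c)) (fun f => DFm δ f) =
      DFm δ [PTm.I a, PTm.I b, PTm.I c] +
      ∑ τ' ∈ subs (T.prod a b c), r τ' • DFmO δ (Cminus τ' (T.prod a b c)) := by
    rw [Rmap_prod, lsm_add, lsm_single, one_smul, lsm_finset_sum]
    congr 1
    exact Finset.sum_congr rfl fun τ' _ => hL τ'
  -- pointwise expansion of the inner sum on the right-hand side
  have point : ∀ p ∈ (DI δ a).support, ∀ q ∈ (DI δ b).support,
      ∀ s ∈ (DI δ c).support,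
      ((Rmap r (T.prod p.1 q.1 s.1)).sum fun f cf =>
        Finsupp.single ((f, p.2 ++ q.2 ++ s.2) : List (PTm d) × List (PTm d)) cf) =
      Finsupp.single (([PTm.I p.1, PTm.I q.1, PTm.I s.1] : List (PTm d)),
        p.2 ++ q.2 ++ s.2) 1 +
      ∑ τ' ∈ subs (T.prod a b c),
        r τ' • CsO (Cminus τ' (T.prod p.1 q.1 s.1)) (p.2 ++ q.2 ++ s.2) := by
    intro p hp q hq s hs
    rw [sum_single_eq_lsm, Rmap_prod, lsm_add, lsm_finset_sum]
    congr 1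
    · rw [lsm_single, one_smul]
    · have e : ∀ τ' : T d,
          lsm (r τ' • CsL (Cminus τ' (T.prod p.1 q.1 s.1)))
            (fun f => Finsupp.single
              ((f, p.2 ++ q.2 ++ s.2) : List (PTm d) × List (PTm d)) 1) =
          r τ' • CsO (Cminus τ' (T.prod p.1 q.1 s.1)) (p.2 ++ q.2 ++ s.2) :=
        fun τ' => by rw [lsm_smul, lsm_CsL_single]
      rw [Finset.sum_congr rfl fun τ' _ => e τ']
      refine Finset.sum_subset
        (subs_prod_mono (DI_supp hδ a p hp) (DI_supp hδ b q hq)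
          (DI_supp hδ c s hs)) ?_
      intro τ' _ hnot
      rcases hC : Cminus τ' (T.prod p.1 q.1 s.1) with _ | f
      · simp
      · exact absurd (Cminus_mem _ _ _ hC) hnot
  have hsplit : (lsm (DI δ a) fun p => lsm (DI δ b) fun q => lsm (DI δ c) fun s =>
      ((Rmap r (T.prod p.1 q.1 s.1)).sum fun f cf =>
        Finsupp.single ((f, p.2 ++ q.2 ++ s.2) : List (PTm d) × List (PTm d)) cf)) =
      (lsm (DI δ a) fun p => lsm (DI δ b) fun q => lsm (DI δ c) fun s =>
        Finsupp.single (([PTm.I p.1, PTm.I q.1, PTm.I s.1] : List (PTm d)),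
          p.2 ++ q.2 ++ s.2) 1 +
        ∑ τ' ∈ subs (T.prod a b c),
          r τ' • CsO (Cminus τ' (T.prod p.1 q.1 s.1)) (p.2 ++ q.2 ++ s.2)) :=
    lsm_congr fun p hp => lsm_congr fun q hq => lsm_congr fun s hs =>
      point p hp q hq s hs
  have e1 : (lsm (DI δ a) fun p => lsm (DI δ b) fun q => lsm (DI δ c) fun s =>
      Finsupp.single (([PTm.I p.1, PTm.I q.1, PTm.I s.1] : List (PTm d)),
        p.2 ++ q.2 ++ s.2) 1 +
      ∑ τ' ∈ subs (T.prod a b c),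
        r τ' • CsO (Cminus τ' (T.prod p.1 q.1 s.1)) (p.2 ++ q.2 ++ s.2)) =
      (lsm (DI δ a) fun p => lsm (DI δ b) fun q => lsm (DI δ c) fun s =>
        Finsupp.single (([PTm.I p.1, PTm.I q.1, PTm.I s.1] : List (PTm d)),
          p.2 ++ q.2 ++ s.2) 1) +
      (lsm (DI δ a) fun p => lsm (DI δ b) fun q => lsm (DI δ c) fun s =>
        ∑ τ' ∈ subs (T.prod a b c),
          r τ' • CsO (Cminus τ' (T.prod p.1 q.1 s.1)) (p.2 ++ q.2 ++ s.2)) := by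
    refine Eq.trans (lsm_congr fun p _ => ?_) (lsm_add_fun _ _ _)
    refine Eq.trans (lsm_congr fun q _ => ?_) (lsm_add_fun _ _ _)
    exact lsm_add_fun _ _ _
  have swap : (lsm (DI δ a) fun p => lsm (DI δ b) fun q => lsm (DI δ c) fun s =>
      ∑ τ' ∈ subs (T.prod a b c),
        r τ' • CsO (Cminus τ' (T.prod p.1 q.1 s.1)) (p.2 ++ q.2 ++ s.2)) =
      ∑ τ' ∈ subs (T.prod a b c),
        (lsm (DI δ a) fun p => lsm (DI δ b) fun q => lsm (DI δ c) fun s =>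
          r τ' • CsO (Cminus τ' (T.prod p.1 q.1 s.1)) (p.2 ++ q.2 ++ s.2)) := by
    refine Eq.trans (lsm_congr fun p _ => ?_) (lsm_finset_swap _ _ _)
    refine Eq.trans (lsm_congr fun q _ => ?_) (lsm_finset_swap _ _ _)
    exact lsm_finset_swap _ _ _
  have master' : ∀ τ' ∈ subs (T.prod a b c),
      (lsm (DI δ a) fun p => lsm (DI δ b) fun q => lsm (DI δ c) fun s =>
        r τ' • CsO (Cminus τ' (T.prod p.1 q.1 s.1)) (p.2 ++ q.2 ++ s.2)) =
      r τ' • DFmO δ (Cminus τ' (T.prod a b c)) := by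
    intro τ' _
    have pullr : (lsm (DI δ a) fun p => lsm (DI δ b) fun q => lsm (DI δ c) fun s =>
        r τ' • CsO (Cminus τ' (T.prod p.1 q.1 s.1)) (p.2 ++ q.2 ++ s.2)) =
        r τ' • (lsm (DI δ a) fun p => lsm (DI δ b) fun q => lsm (DI δ c) fun s =>
          CsO (Cminus τ' (T.prod p.1 q.1 s.1)) (p.2 ++ q.2 ++ s.2)) := by
      refine Eq.trans (lsm_congr fun p _ => ?_) (lsm_smul_fun _ _ _)
      refine Eq.trans (lsm_congr fun q _ => ?_) (lsm_smul_fun _ _ _)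
      exact lsm_smul_fun _ _ _
    rw [pullr]
    by_cases hr : r τ' = 0
    · rw [hr, zero_smul, zero_smul]
    · have hQ := hsupp τ' hr
      cases τ' with
      | one => exact absurd hQ (by simp [Qcond])
      | X i => exact absurd hQ (by simp [Qcond])
      | Xi => exact absurd hQ (by simp [Qcond])
      | prod σ₁ σ₂ σ₃ => rw [master hδ σ₁ σ₂ σ₃ a b c]
  have hRs : lsm (Du δ (T.prod a b c)) (fun p =>
      (Rmap r p.1).sum fun f cf => Finsupp.single (f, p.2) cf) =
      DFm δ [PTm.I a, PTm.I b, PTm.I c] +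
      ∑ τ' ∈ subs (T.prod a b c), r τ' • DFmO δ (Cminus τ' (T.prod a b c)) := by
    rw [show Du δ (T.prod a b c) = mulE (DI δ a) (DI δ b) (DI δ c) from rfl,
      lsm_mulE]
    show (lsm (DI δ a) fun p => lsm (DI δ b) fun q => lsm (DI δ c) fun s =>
      ((Rmap r (T.prod p.1 q.1 s.1)).sum fun f cf =>
        Finsupp.single ((f, p.2 ++ q.2 ++ s.2) : List (PTm d) × List (PTm d)) cf)) = _
    rw [hsplit, e1, swap, Finset.sum_congr rfl master', DFm_three]
  exact hLs.trans hRs.symm
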